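/- If X is a real random variable with E[X] = 0, E[X²] = 1 and E|X|³ = β₃ < ∞, then for all real t with |t| ≤ θ₀/β₃, E[cos(tX)] ≤ 1 - t²/2 + κ β₃ |t|³, where κ = sup_{x>0} x⁻³(cos x - 1 + x²/2) and θ₀ is the unique root in [π,2π] of θ² + 2θ sin θ + 6(cos θ - 1) = 0. -/

import Mathlib

open MeasureTheory Real

lemma cos_key {κ : ℝ}
    (hκ : IsLUB {y : ℝ | ∃ x > 0, y = x⁻¹ ^ 3 * (Real.cos x - 1 + x ^ 2 / 2)} κ)
    (z : ℝ) : Real.cos z ≤ 1 - z ^ 2 / 2 + κ * |z| ^ 3 := by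
  have key : ∀ x : ℝ, 0 < x → Real.cos x ≤ 1 - x ^ 2 / 2 + κ * x ^ 3 := by
    intro x hx
    have h := hκ.1 ⟨x, hx, rfl⟩
    have hx3 : 0 < x ^ 3 := pow_pos hx 3
    have h2 : (x ^ 3)⁻¹ * (Real.cos x - 1 + x ^ 2 / 2) ≤ κ := by
      rwa [inv_pow] at h
    have := (inv_mul_le_iff₀ hx3).mp h2
    nlinarith
  rcases lt_trichotomy z 0 with hz | hz | hz
  · have h := key (-z) (by linarith)
    rw [Real.cos_neg] at h
    rw [abs_of_neg hz]
    calc Real.cos z ≤ 1 - (-z) ^ 2 / 2 + κ * (-z) ^ 3 := h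
      _ = 1 - z ^ 2 / 2 + κ * (-z) ^ 3 := by ring
  · simp [hz]
  · rw [abs_of_pos hz]; exact key z hz

theorem stmt_8 {Ω : Type*} [MeasureSpace Ω] (μ : Measure Ω) [IsProbabilityMeasure μ]
    (X : Ω → ℝ) (hXm : Measurable X)
    (hX : Integrable X μ) (hmean : ∫ ω, X ω ∂μ = 0)
    (hX2 : Integrable (fun ω => X ω ^ 2) μ) (hvar : ∫ ω, X ω ^ 2 ∂μ = 1)
    (β₃ : ℝ) (hX3 : Integrable (fun ω => |X ω| ^ 3) μ)
    (hβ₃ : ∫ ω, |X ω| ^ 3 ∂μ = β₃)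
    (θ₀ κ : ℝ)
    (hθ : θ₀ ∈ Set.Icc π (2 * π))
    (hroot : θ₀ ^ 2 + 2 * θ₀ * Real.sin θ₀ + 6 * (Real.cos θ₀ - 1) = 0)
    (huniq : ∀ θ ∈ Set.Icc π (2 * π),
      θ ^ 2 + 2 * θ * Real.sin θ + 6 * (Real.cos θ - 1) = 0 → θ = θ₀)
    (hκ : IsLUB {y : ℝ | ∃ x > 0, y = x⁻¹ ^ 3 * (Real.cos x - 1 + x ^ 2 / 2)} κ)
    (t : ℝ) (ht : |t| ≤ θ₀ / β₃) :
    ∫ ω, Real.cos (t * X ω) ∂μ ≤ 1 - t ^ 2 / 2 + κ * β₃ * |t| ^ 3 := by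
  have hcos_int : Integrable (fun ω => Real.cos (t * X ω)) μ := by
    apply Integrable.mono' (integrable_const 1)
      ((Real.continuous_cos.comp (continuous_const.mul continuous_id)).measurable.comp
        hXm).aestronglyMeasurable
    exact Filter.Eventually.of_forall fun ω => Real.abs_cos_le_one _
  have hg_int : Integrable
      (fun ω => 1 - t ^ 2 * X ω ^ 2 / 2 + κ * |t| ^ 3 * |X ω| ^ 3) μ := by
    apply Integrable.add
    · exact (integrable_const 1).sub ((hX2.const_mul (t ^ 2)).div_const 2)
    · exact hX3.const_mul _
  have hmono : ∫ ω, Real.cos (t * X ω) ∂μ ≤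
      ∫ ω, (1 - t ^ 2 * X ω ^ 2 / 2 + κ * |t| ^ 3 * |X ω| ^ 3) ∂μ := by
    apply integral_mono hcos_int hg_int
    intro ω
    have h := cos_key hκ (t * X ω)
    calc Real.cos (t * X ω) ≤ 1 - (t * X ω) ^ 2 / 2 + κ * |t * X ω| ^ 3 := h
      _ = 1 - t ^ 2 * X ω ^ 2 / 2 + κ * |t| ^ 3 * |X ω| ^ 3 := by
        rw [abs_mul, mul_pow]; ring
  calc ∫ ω, Real.cos (t * X ω) ∂μ
      ≤ ∫ ω, (1 - t ^ 2 * X ω ^ 2 / 2 + κ * |t| ^ 3 * |X ω| ^ 3) ∂μ := hmono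
    _ = ∫ ω, (1 - t ^ 2 * X ω ^ 2 / 2) ∂μ + ∫ ω, κ * |t| ^ 3 * |X ω| ^ 3 ∂μ :=
        integral_add (f := fun ω => 1 - t ^ 2 * X ω ^ 2 / 2)
          (g := fun ω => κ * |t| ^ 3 * |X ω| ^ 3)
          ((integrable_const 1).sub ((hX2.const_mul (t ^ 2)).div_const 2))
          (hX3.const_mul _)
    _ = (1 - t ^ 2 / 2) + κ * β₃ * |t| ^ 3 := by
        rw [integral_sub (integrable_const 1) ((hX2.const_mul (t ^ 2)).div_const 2)]
        simp only [integral_const, measure_univ, ENNReal.toReal_one, probReal_univ, smul_eq_mul, one_mul]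
        rw [integral_div, integral_const_mul, hvar, integral_const_mul, hβ₃]
        ring
    _ = 1 - t ^ 2 / 2 + κ * β₃ * |t| ^ 3 := by ring
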